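/- Let X be a Tychonoff space with Stone–Čech compactification βX. If βX \ X is Menger, then for every sequence (K_n)_{n∈ω} of compact subsets of X and every family (F_p^n)_{p∈ω} where for each n, (F_p^n)_{p∈ω} is a decreasing closed net at K_n in X, there exists f : ω → ω such that K = ⋂_{n∈ω} F_{f(n)}^n is compact and (⋂_{k≤n} F_{f(k)}^k)_{n∈ω} is a closed net at K in X. -/

import Mathlib

open Set

/-- A space is Menger if for every sequence of open covers one can choose finite
subfamilies whose union is a cover. -/
def Menger (X : Type*) [TopologicalSpace X] : Prop :=
  ∀ U : ℕ → Set (Set X),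
    (∀ n, (∀ s ∈ U n, IsOpen s) ∧ ⋃₀ U n = Set.univ) →
    ∃ V : ℕ → Set (Set X),
      (∀ n, V n ⊆ U n ∧ (V n).Finite) ∧ ⋃₀ (⋃ n, V n) = Set.univ

/-- A family of open sets is an almost covering if the complement of its union is compact. -/
def AlmostCover {X : Type*} [TopologicalSpace X] (U : Set (Set X)) : Prop :=
  (∀ s ∈ U, IsOpen s) ∧ IsCompact (⋃₀ U)ᶜ

/-- The selection principle `S_fin(𝓐,𝓐)` for almost coverings. -/
def SfinAA (X : Type*) [TopologicalSpace X] : Prop :=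
  ∀ U : ℕ → Set (Set X), (∀ n, AlmostCover (U n)) →
    ∃ V : ℕ → Set (Set X),
      (∀ n, V n ⊆ U n ∧ (V n).Finite) ∧ IsCompact (⋃₀ (⋃ n, V n))ᶜ

/-- A sequence of sets is a closed net at `K` if each member is closed and contains `K`,
and every open neighborhood of `K` contains some member. -/
def ClosedNetSeqAt {X : Type*} [TopologicalSpace X] (F : ℕ → Set X) (K : Set X) : Prop :=
  (∀ n, IsClosed (F n) ∧ K ⊆ F n) ∧
    ∀ A : Set X, IsOpen A → K ⊆ A → ∃ n, F n ⊆ A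

/-- A decreasing closed net at `K`. -/
def DecClosedNetSeqAt {X : Type*} [TopologicalSpace X] (F : ℕ → Set X) (K : Set X) : Prop :=
  (∀ n, F (n + 1) ⊆ F n) ∧ ClosedNetSeqAt F K

/-- A compact set `Q` has a countable (outer) neighborhood base in `X`. -/
def HasCountableOuterBase {X : Type*} [TopologicalSpace X] (Q : Set X) : Prop :=
  ∃ B : ℕ → Set X, (∀ k, IsOpen (B k) ∧ Q ⊆ B k) ∧
    ∀ A : Set X, IsOpen A → Q ⊆ A → ∃ k, B k ⊆ A

/-- `X` is of countable type: every compact set is contained in a compact set having a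
countable neighborhood base in `X`. -/
def CountableType (X : Type*) [TopologicalSpace X] : Prop :=
  ∀ K : Set X, IsCompact K → ∃ Q : Set X, IsCompact Q ∧ K ⊆ Q ∧ HasCountableOuterBase Q

/-- The remainder `βX \ X` of the Stone–Čech compactification. -/
abbrev StoneCechRemainder (X : Type*) [TopologicalSpace X] : Set (StoneCech X) :=
  (Set.range (stoneCechUnit : X → StoneCech X))ᶜ

section Aux

open Topology Filter unitInterval

/-- For a Tychonoff space, the unit map into the Stone–Čech compactification is inducing. -/
lemma isInducing_stoneCechUnit_aux {X : Type*} [TopologicalSpace X] [T35Space X] :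
    Topology.IsInducing (stoneCechUnit : X → StoneCech X) := by
  rw [Topology.isInducing_iff_nhds]
  intro x
  refine le_antisymm (Filter.map_le_iff_le_comap.1 (continuous_stoneCechUnit.tendsto x)) ?_
  intro U hU
  obtain ⟨U', hU'sub, hU'open, hxU'⟩ := mem_nhds_iff.1 hU
  obtain ⟨g, hgc, hgx, hgK⟩ :=
    CompletelyRegularSpace.completely_regular x U'ᶜ hU'open.isClosed_compl (by simpa using hxU')
  have hGe : stoneCechExtend hgc ∘ stoneCechUnit = g := stoneCechExtend_extends hgc
  refine Filter.mem_comap.2 ⟨stoneCechExtend hgc ⁻¹' ({1}ᶜ), ?_, ?_⟩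
  · refine (isClosed_singleton.isOpen_compl.preimage
      (continuous_stoneCechExtend hgc)).mem_nhds ?_
    have hx0 : stoneCechExtend hgc (stoneCechUnit x) = g x := congrFun hGe x
    simp only [Set.mem_preimage, Set.mem_compl_iff, Set.mem_singleton_iff, hx0, hgx]
    exact fun h => (zero_ne_one (α := I)) h
  · intro z hz
    have hz' : g z ≠ 1 := by
      have hzz : stoneCechExtend hgc (stoneCechUnit z) = g z := congrFun hGe z
      simpa [hzz] using hz
    by_contra hzU
    exact hz' (hgK (fun hzU' => hzU (hU'sub hzU')))

end Aux

theorem stmt10 {X : Type*} [TopologicalSpace X] [T35Space X]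
    (h : Menger ↥(StoneCechRemainder X))
    (K : ℕ → Set X) (hK : ∀ n, IsCompact (K n))
    (F : ℕ → ℕ → Set X) (hF : ∀ n, DecClosedNetSeqAt (F n) (K n)) :
    ∃ f : ℕ → ℕ, IsCompact (⋂ n, F n (f n)) ∧
      ClosedNetSeqAt (fun n => ⋂ (k) (_ : k ≤ n), F k (f k)) (⋂ n, F n (f n)) := by
  classical
  set e : X → StoneCech X := stoneCechUnit with he_def
  have he : Topology.IsInducing e := isInducing_stoneCechUnit_aux
  have hec : Continuous e := continuous_stoneCechUnit
  have hFanti : ∀ n, Antitone (F n) := fun n => antitone_nat_of_succ_le (fun p => (hF n).1 p)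
  have hFcl : ∀ n p, IsClosed (F n p) := fun n p => ((hF n).2.1 p).1
  -- the open "co-closure" sets in the remainder
  set g : ℕ → ℕ → Set ↥(StoneCechRemainder X) :=
    fun n p => {y | (y : StoneCech X) ∉ closure (e '' F n p)} with hg_def
  have hgopen : ∀ n p, IsOpen (g n p) :=
    fun n p => isClosed_closure.isOpen_compl.preimage continuous_subtype_val
  have hgmono : ∀ n, Monotone (g n) := by
    intro n p q hpq y hy
    exact fun hmem => hy (closure_mono (Set.image_mono (f := e) (hFanti n hpq)) hmem)
  have hcover : ∀ (n : ℕ) (y : ↥(StoneCechRemainder X)), ∃ p, y ∈ g n p := by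
    intro n y
    have hCc : IsCompact (e '' K n) := (hK n).image hec
    have hyC : (y : StoneCech X) ∉ e '' K n := fun hy' =>
      y.2 (Set.image_subset_range e (K n) hy')
    obtain ⟨U, W, hUo, hWo, hCU, hyW, hUW⟩ :=
      SeparatedNhds.of_isCompact_isCompact hCc isCompact_singleton
        (Set.disjoint_singleton_right.2 hyC)
    have hyclU : (y : StoneCech X) ∉ closure U := fun hy' =>
      Set.disjoint_left.1 (hUW.closure_left hWo) hy' (hyW rfl)
    obtain ⟨p, hp⟩ := (hF n).2.2 (e ⁻¹' U) (hUo.preimage hec)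
      (fun x hx => hCU ⟨x, hx, rfl⟩)
    refine ⟨p, fun hmem => hyclU (closure_mono ?_ hmem)⟩
    exact (Set.image_mono (f := e) hp).trans (Set.image_preimage_subset e U)
  -- apply Menger to the covers given by the ranges of `g n`
  obtain ⟨V, hV1, hV2⟩ := h (fun n => Set.range (g n)) (by
    intro n
    constructor
    · rintro s ⟨p, rfl⟩
      exact hgopen n p
    · refine Set.eq_univ_of_forall fun y => ?_
      obtain ⟨p, hp⟩ := hcover n y
      exact ⟨g n p, Set.mem_range_self p, hp⟩)
  -- choose bounding indices
  have hchoice : ∀ n, ∃ m, ∀ s ∈ V n, s ⊆ g n m := by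
    intro n
    have hfin : (V n).Finite := (hV1 n).2
    haveI := hfin.to_subtype
    choose p hp using fun s : ↥(V n) => (hV1 n).1 s.2
    obtain ⟨m, hm⟩ := (Set.finite_range p).bddAbove
    refine ⟨m, fun s hs => ?_⟩
    have h1 : g n (p ⟨s, hs⟩) = s := hp ⟨s, hs⟩
    rw [← h1]
    exact hgmono n (hm (Set.mem_range_self (⟨s, hs⟩ : ↥(V n))))
  choose f hf' using hchoice
  -- the intersection of the chosen closures misses the remainder
  have hrem : ∀ z : StoneCech X, z ∉ Set.range e → ∃ n, z ∉ closure (e '' F n (f n)) := by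
    intro z hz
    have hzmem : (⟨z, hz⟩ : ↥(StoneCechRemainder X)) ∈ ⋃₀ (⋃ n, V n) := by
      rw [hV2]; exact Set.mem_univ _
    obtain ⟨s, hs, hys⟩ := hzmem
    obtain ⟨n, hsn⟩ := Set.mem_iUnion.1 hs
    exact ⟨n, hf' n s hsn hys⟩
  set Q : ℕ → Set (StoneCech X) := fun n => closure (e '' F n (f n)) with hQ
  set T : Set (StoneCech X) := ⋂ n, Q n with hT
  have hTsub : T ⊆ Set.range e := by
    intro z hz
    by_contra hzr
    obtain ⟨n, hn⟩ := hrem z hzr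
    exact hn (Set.mem_iInter.1 hz n)
  have hpre : ∀ n p, e ⁻¹' closure (e '' F n p) = F n p := fun n p =>
    (he.closure_eq_preimage_closure_image (F n p)).symm.trans (hFcl n p).closure_eq
  have hKT : e '' (⋂ n, F n (f n)) = T := by
    apply Set.Subset.antisymm
    · rintro _ ⟨x, hx, rfl⟩
      exact Set.mem_iInter.2 fun n => subset_closure ⟨x, Set.mem_iInter.1 hx n, rfl⟩
    · intro z hz
      obtain ⟨x, rfl⟩ := hTsub hz
      refine ⟨x, Set.mem_iInter.2 fun n => ?_, rfl⟩
      rw [← hpre n (f n)]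
      exact Set.mem_iInter.1 hz n
  have hTcomp : IsCompact T := (isClosed_iInter fun n => isClosed_closure).isCompact
  have hKcomp : IsCompact (⋂ n, F n (f n)) := by
    rw [he.isCompact_iff, hKT]; exact hTcomp
  refine ⟨f, hKcomp, ⟨fun n =>
    ⟨isClosed_iInter fun k => isClosed_iInter fun _ => hFcl k (f k),
      fun x hx => Set.mem_iInter.2 fun k => Set.mem_iInter.2 fun _ => Set.mem_iInter.1 hx k⟩,
    ?_⟩⟩
  intro A hA hKA
  obtain ⟨A', hA'o, hA'pre⟩ := he.isOpen_iff.1 hA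
  set D : ℕ → Set (StoneCech X) := fun n => (⋂ k, ⋂ (_ : k ≤ n), Q k) ∩ A'ᶜ with hD
  have hDclosed : ∀ n, IsClosed (D n) := fun n =>
    (isClosed_iInter fun k => isClosed_iInter fun _ => isClosed_closure).inter
      hA'o.isClosed_compl
  have hDcomp : ∀ n, IsCompact (D n) := fun n => (hDclosed n).isCompact
  have hDanti : ∀ p q, p ≤ q → D q ⊆ D p := by
    intro p q hpq z hz
    exact ⟨Set.mem_iInter.2 fun k => Set.mem_iInter.2 fun hk =>
      Set.mem_iInter.1 (Set.mem_iInter.1 hz.1 k) (hk.trans hpq), hz.2⟩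
  have hiD : (⋂ n, D n) = ∅ := by
    refine Set.eq_empty_iff_forall_notMem.2 fun z hz => ?_
    have hzT : z ∈ T := Set.mem_iInter.2 fun n =>
      Set.mem_iInter.1 (Set.mem_iInter.1 (Set.mem_iInter.1 hz n).1 n) le_rfl
    have hzA' : z ∈ A' := by
      rw [← hKT] at hzT
      obtain ⟨x, hx, rfl⟩ := hzT
      have hxA : x ∈ A := hKA hx
      rw [← hA'pre] at hxA
      exact hxA
    exact (Set.mem_iInter.1 hz 0).2 hzA'
  have hex : ∃ n, D n = ∅ := by
    by_contra hne
    push_neg at hne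
    have hnon : (⋂ n, D n).Nonempty :=
      IsCompact.nonempty_iInter_of_directed_nonempty_isCompact_isClosed D
        (fun p q => ⟨max p q, hDanti p (max p q) (le_max_left _ _),
          hDanti q (max p q) (le_max_right _ _)⟩)
        (fun n => hne n) hDcomp hDclosed
    rw [hiD] at hnon
    exact Set.not_nonempty_empty hnon
  obtain ⟨n, hn⟩ := hex
  refine ⟨n, fun x hx => ?_⟩
  have hxA' : e x ∈ A' := by
    by_contra hxA'
    have hxD : e x ∈ D n :=
      ⟨Set.mem_iInter.2 fun k => Set.mem_iInter.2 fun hk =>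
        subset_closure ⟨x, Set.mem_iInter.1 (Set.mem_iInter.1 hx k) hk, rfl⟩, hxA'⟩
    rw [hn] at hxD
    exact hxD
  rw [← hA'pre]
  exact hxA'
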